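/- Suppose τ ∈ (0,1) and g is a horizontally valid two-dimensional move with g + gᵀ = t_τ. Then ĝ(α,2) ≤ 2 − P_{2−τ}(α) for every α ∈ [2,∞]. -/

import Mathlib

open scoped BigOperators Classical

noncomputable section

/-- The profile `P_x` of a point `x ∈ ℝ≥0`, viewed as a function on `[1,∞]`
(the extended reals `EReal` model the interval with its point `∞ = ⊤`):
`P_x(α) = 1` for `α ∈ [1,2)`, `P_x(α) = (xα - x)/(x + α - 2)` for `α ∈ [2,∞)`,
and `P_x(∞) = x` (with the conventions `P_0(α) = 0` for `α ∈ [2,∞]`, which the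
formula also yields since division by zero is zero). -/
def Pfun (x : ℝ) (α : EReal) : ℝ :=
  if α = ⊤ then x
  else if α.toReal < 2 then 1
  else (x * α.toReal - x) / (x + α.toReal - 2)

/-- A one-dimensional move: a finitely supported function on `ℝ≥0`
(modeled as a function on `ℝ` vanishing on the negatives). -/
def IsMove1 (f : ℝ → ℝ) : Prop :=
  (Function.support f).Finite ∧ ∀ x : ℝ, x < 0 → f x = 0

/-- Validity of a one-dimensional move. -/
def IsValid1 (f : ℝ → ℝ) : Prop :=
  (∑ᶠ x, f x) = 0 ∧
  (∀ lam : ℝ, 0 < lam → 0 ≤ ∑ᶠ x, (x / (x + lam)) * f x) ∧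
  0 ≤ ∑ᶠ x, x * f x

/-- The profile of a one-dimensional move. -/
def prof1 (f : ℝ → ℝ) (α : EReal) : ℝ := ∑ᶠ x, f x * Pfun x α

/-- A two-dimensional move: a finitely supported function on `ℝ≥0 × ℝ≥0`. -/
def IsMove2 (q : ℝ × ℝ → ℝ) : Prop :=
  (Function.support q).Finite ∧ ∀ p : ℝ × ℝ, p.1 < 0 ∨ p.2 < 0 → q p = 0

/-- A two-dimensional move is horizontally valid if all of its rows are valid. -/
def HorizValid (q : ℝ × ℝ → ℝ) : Prop := ∀ y : ℝ, IsValid1 fun x => q (x, y)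

/-- A two-dimensional move is vertically valid if all of its columns are valid. -/
def VertValid (q : ℝ × ℝ → ℝ) : Prop := ∀ x : ℝ, IsValid1 fun y => q (x, y)

/-- The two-variable profile of a two-dimensional move. -/
def prof2 (q : ℝ × ℝ → ℝ) (α β : EReal) : ℝ :=
  ∑ᶠ p : ℝ × ℝ, q p * Pfun p.1 α * Pfun p.2 β

/-- The transpose move `qᵀ(x,y) = q(y,x)`. -/
def transpose (q : ℝ × ℝ → ℝ) : ℝ × ℝ → ℝ := fun p => q (p.2, p.1)

/-- `pt x y` is the indicator move `⟦x,y⟧`. -/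
def pt (x y : ℝ) : ℝ × ℝ → ℝ := fun p => if p = (x, y) then 1 else 0

/-- The move `t_τ = 2·⟦1,1⟧ - ⟦2-τ,0⟧ - ⟦0,2-τ⟧`. -/
def tMove (τ : ℝ) : ℝ × ℝ → ℝ :=
  fun p => 2 * pt 1 1 p - pt (2 - τ) 0 p - pt 0 (2 - τ) p

/-- `slice g b` is the move `g_b`: the part of `g` on the horizontal line `y = b`. -/
def hslice (g : ℝ × ℝ → ℝ) (b : ℝ) : ℝ × ℝ → ℝ := fun p => if p.2 = b then g p else 0

lemma toReal_ge2 {α : EReal} (hα : ((2:ℝ):EReal) ≤ α) (htop : α ≠ ⊤) : (2:ℝ) ≤ α.toReal := by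
  have := EReal.toReal_le_toReal hα (by simp) htop
  simpa using this

lemma Pfun_two (y : ℝ) : Pfun y ((2:ℝ):EReal) = if y = 0 then 0 else 1 := by
  have h1 : y * 2 - y = y := by ring
  have h2 : y + 2 - 2 = y := by ring
  simp only [Pfun, EReal.coe_ne_top, if_false, EReal.toReal_coe, lt_irrefl, h1, h2]
  by_cases hy : y = 0
  · simp [hy]
  · rw [if_neg hy, div_self hy]

lemma Pfun_one {α : EReal} (hα : ((2:ℝ):EReal) ≤ α) : Pfun 1 α = 1 := by
  rcases eq_or_ne α ⊤ with h | h
  · simp [Pfun, h]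
  · have ha := toReal_ge2 hα h
    simp only [Pfun, h, if_false, not_lt.2 ha, if_neg (not_lt.2 ha)]
    have h1 : 1 * α.toReal - 1 = α.toReal - 1 := by ring
    have h2 : 1 + α.toReal - 2 = α.toReal - 1 := by ring
    rw [h1, h2, div_self (by linarith)]

lemma Pfun_zero {α : EReal} (hα : ((2:ℝ):EReal) ≤ α) : Pfun 0 α = 0 := by
  rcases eq_or_ne α ⊤ with h | h
  · simp [Pfun, h]
  · have ha := toReal_ge2 hα h
    simp only [Pfun, h, if_false, if_neg (not_lt.2 ha)]
    simp

lemma valid_nonneg (f : ℝ → ℝ) (hfin : (Function.support f).Finite)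
    (hneg : ∀ x : ℝ, x < 0 → f x = 0) (hv : IsValid1 f)
    (α : EReal) (hα : ((2:ℝ):EReal) ≤ α) :
    0 ≤ ∑ᶠ x, f x * Pfun x α := by
  classical
  set s : Finset ℝ := hfin.toFinset with hs
  have hmem : ∀ x : ℝ, x ∈ s → f x ≠ 0 := by
    intro x hx
    rw [hs, Set.Finite.mem_toFinset] at hx
    exact hx
  have hposmem : ∀ x : ℝ, x ∈ s → 0 ≤ x := by
    intro x hx
    by_contra h
    exact hmem x hx (hneg x (lt_of_not_ge h))
  have hconv : ∀ h : ℝ → ℝ, (∀ x, f x = 0 → h x = 0) → ∑ᶠ x, h x = ∑ x ∈ s, h x := by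
    intro h hh
    apply finsum_eq_finset_sum_of_support_subset
    intro x hx
    rw [Function.mem_support] at hx
    rw [hs, Set.Finite.coe_toFinset, Function.mem_support]
    exact fun h0 => hx (hh x h0)
  rw [hconv _ (fun x h0 => by rw [h0, zero_mul])]
  rcases eq_or_ne α ⊤ with htop | htop
  · subst htop
    have he : ∀ x : ℝ, f x * Pfun x ⊤ = x * f x := by
      intro x; simp [Pfun]; ring
    rw [Finset.sum_congr rfl (fun x _ => he x),
      ← hconv (fun x => x * f x) (fun x h0 => by simp [h0])]
    exact hv.2.2
  · have ha2 : (2:ℝ) ≤ α.toReal := toReal_ge2 hα htop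
    set a := α.toReal with hadef
    have hPf : ∀ x : ℝ, Pfun x α = (x * a - x) / (x + a - 2) := by
      intro x; simp [Pfun, htop, if_neg (not_lt.2 ha2)]; exact if_neg (not_lt.2 ha2)
    rcases lt_or_eq_of_le ha2 with hlt | heq
    · set l := a - 2 with hl
      have hlpos : (0:ℝ) < l := by rw [hl]; linarith
      have h0 := hv.2.1 l hlpos
      rw [hconv _ (fun x h0 => by rw [h0, mul_zero])] at h0
      have he : ∑ x ∈ s, f x * Pfun x α = (a - 1) * ∑ x ∈ s, (x / (x + l)) * f x := by
        rw [Finset.mul_sum]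
        apply Finset.sum_congr rfl
        intro x hx
        have hx0 : 0 ≤ x := hposmem x hx
        have hxl : x + l ≠ 0 := by positivity
        rw [hPf x]
        have hxa : x + a - 2 = x + l := by rw [hl]; ring
        rw [hxa]
        field_simp
      rw [he]
      exact mul_nonneg (by linarith) h0
    · have hT : ∑ x ∈ s, f x * Pfun x α = ∑ x ∈ s, (x / x) * f x := by
        apply Finset.sum_congr rfl
        intro x hx
        rw [hPf x, ← heq]
        have h1 : x * 2 - x = x := by ring
        have h2 : x + 2 - 2 = x := by ring
        rw [h1, h2]; ring
      rw [hT]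
      have htend : Filter.Tendsto (fun l : ℝ => ∑ x ∈ s, (x / (x + l)) * f x)
          (nhdsWithin 0 (Set.Ioi 0)) (nhds (∑ x ∈ s, (x / x) * f x)) := by
        apply tendsto_finset_sum
        intro x hx
        rcases eq_or_lt_of_le (hposmem x hx) with h0 | h0
        · rw [← h0]
          simp
        · have ht : Filter.Tendsto (fun l : ℝ => (x / (x + l)) * f x) (nhds 0)
              (nhds ((x / (x + 0)) * f x)) := by
            apply Filter.Tendsto.mul_const
            exact Filter.Tendsto.div tendsto_const_nhds
              (tendsto_const_nhds.add Filter.tendsto_id) (by simp; linarith)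
          have hm := ht.mono_left (nhdsWithin_le_nhds (s := Set.Ioi (0:ℝ)))
          simpa using hm
      apply ge_of_tendsto htend
      apply Filter.eventually_of_mem self_mem_nhdsWithin
      intro l hl
      have h1 := hv.2.1 l hl
      rwa [hconv _ (fun x h0 => by rw [h0, mul_zero])] at h1

lemma sum_pt (X : Finset ℝ) {a b : ℝ} (ha : a ∈ X) (hb : b ∈ X) (r : ℝ → ℝ → ℝ) :
    ∑ x ∈ X, ∑ y ∈ X, pt a b (x, y) * r x y = r a b := by
  have e : ∀ x y : ℝ, pt a b (x, y) * r x y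
      = if x = a then (if y = b then r a b else 0) else 0 := by
    intro x y
    simp only [pt, Prod.mk.injEq]
    by_cases hx : x = a <;> by_cases hy : y = b <;> simp [hx, hy]
  have e2 : ∀ x : ℝ, (∑ y ∈ X, if x = a then (if y = b then r a b else 0) else 0)
      = if x = a then r a b else 0 := by
    intro x
    by_cases hx : x = a
    · simp only [hx, if_true]
      rw [Finset.sum_ite_eq' X b (fun _ => r a b), if_pos hb]
    · simp [hx]
  calc ∑ x ∈ X, ∑ y ∈ X, pt a b (x, y) * r x y
      = ∑ x ∈ X, if x = a then r a b else 0 := by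
        refine Finset.sum_congr rfl (fun x _ => ?_)
        rw [Finset.sum_congr rfl (fun y _ => e x y), e2 x]
    _ = r a b := by rw [Finset.sum_ite_eq' X a (fun _ => r a b), if_pos ha]


/-- If `g` is horizontally valid and `g + gᵀ = t_τ`, then
`ĝ(α,2) ≤ 2 - P_{2-τ}(α)` for all `α ∈ [2,∞]`. -/
theorem stmt_9 (τ : ℝ) (hτ : τ ∈ Set.Ioo (0 : ℝ) 1)
    (g : ℝ × ℝ → ℝ) (hmove : IsMove2 g) (hval : HorizValid g)
    (hsum : ∀ p, g p + transpose g p = tMove τ p) :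
    ∀ α : EReal, ((2 : ℝ) : EReal) ≤ α →
      prof2 g α ((2 : ℝ) : EReal) ≤ 2 - Pfun (2 - τ) α := by
  intro α hα
  classical
  obtain ⟨hτ0, hτ1⟩ := hτ
  have h0a : ¬(0:ℝ) = 2 - τ := by intro h; linarith
  set F : Finset (ℝ × ℝ) := hmove.1.toFinset with hF
  set X : Finset ℝ := ((F.image Prod.fst ∪ F.image Prod.snd) ∪ {1, 2 - τ, 0}) with hXdef
  have hmemX : ∀ p : ℝ × ℝ, g p ≠ 0 → p.1 ∈ X ∧ p.2 ∈ X := by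
    intro p hp
    have hpF : p ∈ F := by rw [hF, Set.Finite.mem_toFinset]; exact hp
    exact ⟨Finset.mem_union_left _ (Finset.mem_union_left _ (Finset.mem_image_of_mem _ hpF)),
      Finset.mem_union_left _ (Finset.mem_union_right _ (Finset.mem_image_of_mem _ hpF))⟩
  have h1X : (1:ℝ) ∈ X := by rw [hXdef]; simp
  have haX : (2 - τ) ∈ X := by rw [hXdef]; simp
  have h0X : (0:ℝ) ∈ X := by rw [hXdef]; simp
  set P : ℝ → ℝ := fun x => Pfun x α with hP
  set Q : ℝ → ℝ := fun y => Pfun y ((2:ℝ):EReal) with hQdef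
  have hQ : ∀ y : ℝ, Q y = if y = 0 then 0 else 1 := fun y => Pfun_two y
  have hrow : ∀ y : ℝ, ∑ x ∈ X, g (x, y) = 0 := by
    intro y
    rw [← finsum_eq_finset_sum_of_support_subset _ (s := X)
      (fun x hx => (hmemX (x, y) hx).1)]
    exact (hval y).1
  have hg : ∀ x y : ℝ, g (x, y) = tMove τ (x, y) - g (y, x) := by
    intro x y
    have h := hsum (x, y)
    simp only [transpose] at h
    linarith
  have hprof : prof2 g α ((2:ℝ):EReal) = ∑ x ∈ X, ∑ y ∈ X, g (x, y) * P x * Q y := by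
    rw [prof2, finsum_eq_finset_sum_of_support_subset _ (s := X ×ˢ X) ?_]
    · rw [Finset.sum_product]
    · intro p hp
      have hgp : g p ≠ 0 := by
        intro h
        rw [Function.mem_support] at hp
        exact hp (by rw [h, zero_mul, zero_mul])
      exact Finset.mem_product.2 ⟨(hmemX p hgp).1, (hmemX p hgp).2⟩
  have hR : 0 ≤ ∑ y ∈ X, g (y, 0) * P y := by
    have hfin : (Function.support fun v => g (v, 0)).Finite := by
      apply (hmove.1.image Prod.fst).subset
      intro v hv
      exact ⟨(v, 0), hv, rfl⟩
    have hnn := valid_nonneg (fun v => g (v, 0)) hfin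
      (fun x hx => hmove.2 (x, 0) (Or.inl hx)) (hval 0) α hα
    rwa [finsum_eq_finset_sum_of_support_subset _ (s := X) ?_] at hnn
    intro v hv
    have hv' : g (v, 0) ≠ 0 := by
      intro h
      rw [Function.mem_support] at hv
      exact hv (by simp [h])
    exact (hmemX (v, 0) hv').1
  have hTS : ∑ x ∈ X, ∑ y ∈ X, tMove τ (x, y) * P x * Q y = 2 := by
    have e : ∀ x y : ℝ, tMove τ (x, y) * P x * Q y
        = 2 * (pt 1 1 (x, y) * (P x * Q y))
          - pt (2 - τ) 0 (x, y) * (P x * Q y)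
          - pt 0 (2 - τ) (x, y) * (P x * Q y) := by
      intro x y; simp only [tMove]; ring
    simp only [e, Finset.sum_sub_distrib, ← Finset.mul_sum]
    rw [sum_pt X h1X h1X, sum_pt X haX h0X, sum_pt X h0X haX]
    rw [hQ 1, hQ 0, if_neg one_ne_zero, if_pos rfl]
    rw [hP]
    simp only []
    rw [Pfun_one hα, Pfun_zero hα]
    ring
  have hGS : ∑ x ∈ X, ∑ y ∈ X, g (y, x) * P x * Q y
      = Pfun (2 - τ) α + ∑ y ∈ X, g (y, 0) * P y := by
    rw [Finset.sum_comm]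
    have e : ∀ u v : ℝ, g (u, v) * P v * Q u
        = g (u, v) * P v - (if u = 0 then g (u, v) * P v else 0) := by
      intro u v
      rw [hQ u]
      by_cases hu : u = 0 <;> simp [hu]
    calc ∑ u ∈ X, ∑ v ∈ X, g (u, v) * P v * Q u
        = ∑ u ∈ X, ∑ v ∈ X, (g (u, v) * P v - (if u = 0 then g (u, v) * P v else 0)) := by
          refine Finset.sum_congr rfl (fun u _ => Finset.sum_congr rfl (fun v _ => e u v))
      _ = (∑ u ∈ X, ∑ v ∈ X, g (u, v) * P v)
          - ∑ u ∈ X, ∑ v ∈ X, (if u = 0 then g (u, v) * P v else 0) := by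
          simp only [Finset.sum_sub_distrib]
      _ = 0 - ∑ v ∈ X, g (0, v) * P v := by
          congr 1
          · rw [Finset.sum_comm]
            apply Finset.sum_eq_zero
            intro v _
            rw [← Finset.sum_mul, hrow v, zero_mul]
          · have e2 : ∀ u : ℝ, (∑ v ∈ X, if u = 0 then g (u, v) * P v else 0)
                = if u = 0 then ∑ v ∈ X, g (0, v) * P v else 0 := by
              intro u; by_cases hu : u = 0 <;> simp [hu]
            rw [Finset.sum_congr rfl (fun u _ => e2 u),
              Finset.sum_ite_eq' X 0 (fun _ => ∑ v ∈ X, g (0, v) * P v), if_pos h0X]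
      _ = Pfun (2 - τ) α + ∑ y ∈ X, g (y, 0) * P y := by
          have e3 : ∀ v : ℝ, g (0, v) * P v = tMove τ (0, v) * P v - g (v, 0) * P v := by
            intro v; rw [hg 0 v]; ring
          have e4 : ∀ v : ℝ, tMove τ (0, v) * P v
              = -(if v = 2 - τ then Pfun (2 - τ) α else 0) := by
            intro v
            simp only [tMove, pt, Prod.mk.injEq]
            by_cases hv : v = 2 - τ
            · simp [hv, h0a, hP]
            · simp [hv, h0a]
          rw [Finset.sum_congr rfl (fun v _ => e3 v)]
          simp only [Finset.sum_sub_distrib]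
          rw [Finset.sum_congr rfl (fun v _ => e4 v)]
          rw [Finset.sum_neg_distrib,
            Finset.sum_ite_eq' X (2 - τ) (fun _ => Pfun (2 - τ) α), if_pos haX]
          ring
  have hsplit : ∑ x ∈ X, ∑ y ∈ X, g (x, y) * P x * Q y
      = (∑ x ∈ X, ∑ y ∈ X, tMove τ (x, y) * P x * Q y)
        - ∑ x ∈ X, ∑ y ∈ X, g (y, x) * P x * Q y := by
    have e : ∀ x y : ℝ, g (x, y) * P x * Q y
        = tMove τ (x, y) * P x * Q y - g (y, x) * P x * Q y := by
      intro x y; rw [hg x y]; ring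
    rw [Finset.sum_congr rfl (fun x _ => Finset.sum_congr rfl (fun y _ => e x y))]
    simp only [Finset.sum_sub_distrib]
  rw [hprof, hsplit, hTS, hGS]
  linarith
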